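/- In the degenerate case c₁ = -2α, c₂ = α², the parasuperfunction g(x,θ) = (p+1)α^p x e_q(α^{p+1}x; αθ) + e^{α^{p+1}x} Σ_{k=1}^p (k α^{k-1}/[k]_q!) θ^k satisfies (D² - 2αD + α²)g = 0. -/

import Mathlib

open Complex Finset

/-- The `q`-integer `[n]_q = 1 + q + ⋯ + q^(n-1)` (so `[0]_q = 0`). -/
noncomputable def qint (q : ℂ) (n : ℕ) : ℂ := ∑ i ∈ Finset.range n, q ^ i

/-- The `q`-factorial `[n]_q! = [1]_q [2]_q ⋯ [n]_q`, with `[0]_q! = 1`. -/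
noncomputable def qfact (q : ℂ) (n : ℕ) : ℂ := ∏ i ∈ Finset.range n, qint q (i + 1)

/-- The parasupercovariant derivative `D = ∂_θ + (θ^p/[p]_q!) ∂_x` acting on the
components `(f_0, …, f_p)` of a parasuperfunction `f(x,θ) = Σ f_k(x) θ^k`:
`(Df)_k = [k+1]_q f_{k+1}` for `k < p` and `(Df)_p = (1/[p]_q!) f_0'`. -/
noncomputable def Dop (p : ℕ) (q : ℂ) (f : ℕ → ℝ → ℂ) : ℕ → ℝ → ℂ :=
  fun k x =>
    if k < p then qint q (k + 1) * f (k + 1) x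
    else if k = p then (qfact q p)⁻¹ * deriv (f 0) x
    else 0

private lemma deriv_aux (c d a f : ℂ) (x : ℝ) :
    HasDerivAt (fun x : ℝ => (c * x + d) * Complex.exp (a * x) / f)
      ((c + (c * x + d) * a) * Complex.exp (a * x) / f) x := by
  have h0 : HasDerivAt (fun x : ℝ => (a : ℂ) * x) a x := by
    simpa using (Complex.ofRealCLM.hasDerivAt (x := x)).const_mul a
  have h1 : HasDerivAt (fun x : ℝ => Complex.exp (a * x))
      (Complex.exp (a * x) * a) x := h0.cexp
  have h2 : HasDerivAt (fun x : ℝ => c * (x : ℂ) + d) c x := by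
    simpa using ((Complex.ofRealCLM.hasDerivAt (x := x)).const_mul c).add_const d
  have := (h2.mul h1).div_const f
  refine this.congr_deriv ?_
  ring

/-- Second order linear equation, degenerate case `c₁ = -2α`, `c₂ = α²`: the
parasuperfunction `g(x,θ) = (p+1)α^p x e_q(α^(p+1)x; αθ) + e^(α^(p+1)x) Σ_{k=1}^p (kα^(k-1)/[k]_q!) θ^k`,
with components `g_k(x) = ((p+1)α^(p+k)x + kα^(k-1)) e^(α^(p+1)x)/[k]_q!`,
satisfies `(D² - 2αD + α²)g = 0`. -/
theorem second_order_degenerate_solution (p : ℕ) (hp : 1 ≤ p) (q : ℂ)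
    (hq : q = Complex.exp (2 * Real.pi * Complex.I / (p + 1))) (α : ℂ)
    (g : ℕ → ℝ → ℂ)
    (hg : ∀ k ≤ p, ∀ x : ℝ,
      g k x = (((p : ℂ) + 1) * α ^ (p + k) * x + (k : ℂ) * α ^ (k - 1))
        * Complex.exp (α ^ (p + 1) * x) / qfact q k) :
    ∀ k ≤ p, ∀ x : ℝ,
      (Dop p q)^[2] g k x - 2 * α * Dop p q g k x + α ^ 2 * g k x = 0 := by
  -- q is a primitive (p+1)-th root of unity
  have hprim : IsPrimitiveRoot q (p + 1) := by
    rw [hq]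
    have := Complex.isPrimitiveRoot_exp (p + 1) (by omega)
    simpa using this
  have hqint : ∀ m : ℕ, 1 ≤ m → m ≤ p → qint q m ≠ 0 := by
    intro m hm1 hm2
    have hq1 : q ≠ 1 := hprim.ne_one (by omega)
    have hqm : q ^ m ≠ 1 := hprim.pow_ne_one_of_pos_of_lt (by omega) (by omega)
    rw [qint, geom_sum_eq hq1]
    exact div_ne_zero (sub_ne_zero.mpr hqm) (sub_ne_zero.mpr hq1)
  have hqfact : ∀ m : ℕ, m ≤ p → qfact q m ≠ 0 := by
    intro m hm
    rw [qfact]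
    exact Finset.prod_ne_zero_iff.mpr fun i hi =>
      hqint (i + 1) (by omega) (by simp at hi; omega)
  -- first application of D
  have hstep : ∀ k ≤ p, ∀ x : ℝ, Dop p q g k x
      = (((p : ℂ) + 1) * α ^ (p + k + 1) * x + ((k : ℂ) + 1) * α ^ k)
        * Complex.exp (α ^ (p + 1) * x) / qfact q k := by
    intro k hk x
    rcases lt_or_eq_of_le hk with hlt | rfl
    · rw [Dop]
      simp only [hlt, if_pos]
      rw [hg (k + 1) (by omega) x, Nat.add_sub_cancel]
      push_cast
      have hfs : qfact q (k + 1) = qfact q k * qint q (k + 1) := Finset.prod_range_succ _ _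
      rw [hfs]
      have h1 : qint q (k + 1) ≠ 0 := hqint (k + 1) (by omega) (by omega)
      have h2 : qfact q k ≠ 0 := hqfact k (by omega)
      field_simp
      ring
    · rw [Dop]
      have hg0 : g 0 = fun x : ℝ =>
          (((k : ℂ) + 1) * α ^ (k + 0) * x + ((0 : ℕ) : ℂ) * α ^ (0 - 1))
            * Complex.exp (α ^ (k + 1) * x) / qfact q 0 :=
        funext (hg 0 (Nat.zero_le k))
      rw [if_neg (lt_irrefl k), if_pos rfl, hg0,
        (deriv_aux (((k : ℂ) + 1) * α ^ (k + 0)) (((0 : ℕ) : ℂ) * α ^ (0 - 1))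
          (α ^ (k + 1)) (qfact q 0) x).deriv]
      have h0 : qfact q 0 = 1 := Finset.prod_range_zero _
      rw [h0]
      push_cast
      have hfk : qfact q k ≠ 0 := hqfact k le_rfl
      field_simp
      ring
  -- second application of D
  have hstep2 : ∀ k ≤ p, ∀ x : ℝ, Dop p q (Dop p q g) k x
      = (((p : ℂ) + 1) * α ^ (p + k + 2) * x + ((k : ℂ) + 2) * α ^ (k + 1))
        * Complex.exp (α ^ (p + 1) * x) / qfact q k := by
    intro k hk x
    rcases lt_or_eq_of_le hk with hlt | rfl
    · rw [Dop]
      simp only [hlt, if_pos]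
      rw [hstep (k + 1) (by omega) x]
      have hfs : qfact q (k + 1) = qfact q k * qint q (k + 1) := Finset.prod_range_succ _ _
      rw [hfs]
      have h1 : qint q (k + 1) ≠ 0 := hqint (k + 1) (by omega) (by omega)
      have h2 : qfact q k ≠ 0 := hqfact k (by omega)
      field_simp
      push_cast
      ring
    · rw [Dop]
      have hD0 : Dop k q g 0 = fun x : ℝ =>
          (((k : ℂ) + 1) * α ^ (k + 0 + 1) * x + (((0 : ℕ) : ℂ) + 1) * α ^ (0 : ℕ))
            * Complex.exp (α ^ (k + 1) * x) / qfact q 0 :=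
        funext (hstep 0 (Nat.zero_le k))
      rw [if_neg (lt_irrefl k), if_pos rfl, hD0,
        (deriv_aux (((k : ℂ) + 1) * α ^ (k + 0 + 1)) ((((0 : ℕ) : ℂ) + 1) * α ^ (0 : ℕ))
          (α ^ (k + 1)) (qfact q 0) x).deriv]
      have h0 : qfact q 0 = 1 := Finset.prod_range_zero _
      rw [h0]
      have hfk : qfact q k ≠ 0 := hqfact k le_rfl
      field_simp
      ring
  -- put it together
  intro k hk x
  have hiter : (Dop p q)^[2] g = Dop p q (Dop p q g) := by
    simp [Function.iterate_succ, Function.iterate_zero]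
  rw [hiter, hstep2 k hk x, hstep k hk x, hg k hk x]
  rcases k with _ | j
  · push_cast
    ring
  · have hsub : j + 1 - 1 = j := rfl
    rw [hsub]
    push_cast
    ring
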